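/- Let M, B, C, D, E, F be random variables on a common probability space taking values in nonempty finite sets, and let n, ε, δ, K be real numbers with n ≥ 0, ε ≥ 0, δ ≥ 0. Assume: (i) H[M] = K·n; (ii) M is independent of the triple (B, D, F); (iii) the quadruple (M, B, C, D) is independent of F; (iv) C and D are conditionally independent given the pair (M, B); (v) H[B] ≤ n, H[C] ≤ n, H[D] ≤ n, and H[E] ≤ (K−1)·n; (vi) H[M | C, D, E, F] ≤ n·ε; (vii) H[M | C] ≥ K·n − n·δ. Then the mutual information satisfies I[B : D] ≥ n − 8·n·ε − 5·n·δ. -/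

import Mathlib

open MeasureTheory ProbabilityTheory
open scoped ENNReal

/-- Shannon entropy `H[X]` of a random variable `X` taking values in a finite set,
with respect to the measure `μ`. -/
noncomputable def Hent {Ω S : Type*} [MeasurableSpace Ω] [Fintype S]
    (μ : Measure Ω) (X : Ω → S) : ℝ :=
  ∑ s : S, Real.negMulLog (μ (X ⁻¹' {s})).toReal

/-- Conditional Shannon entropy `H[X | Y] = H[X, Y] - H[Y]`. -/
noncomputable def condHent {Ω S T : Type*} [MeasurableSpace Ω] [Fintype S] [Fintype T]
    (μ : Measure Ω) (X : Ω → S) (Y : Ω → T) : ℝ :=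
  Hent μ (fun ω => (X ω, Y ω)) - Hent μ Y

/-- Mutual information `I[X : Y] = H[X] - H[X | Y]`. -/
noncomputable def mutInfo {Ω S T : Type*} [MeasurableSpace Ω] [Fintype S] [Fintype T]
    (μ : Measure Ω) (X : Ω → S) (Y : Ω → T) : ℝ :=
  Hent μ X - condHent μ X Y

/-- `X` and `Y` are conditionally independent given `Z` (with respect to `μ`). -/
def CondIndepFunOf {Ω S T U : Type*} [MeasurableSpace Ω] (μ : Measure Ω)
    (X : Ω → S) (Y : Ω → T) (Z : Ω → U) : Prop :=
  ∀ (x : S) (y : T) (z : U),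
    μ (X ⁻¹' {x} ∩ Y ⁻¹' {y} ∩ Z ⁻¹' {z}) * μ (Z ⁻¹' {z}) =
      μ (X ⁻¹' {x} ∩ Z ⁻¹' {z}) * μ (Y ⁻¹' {y} ∩ Z ⁻¹' {z})

section Aux
variable {Ω : Type*} [MeasurableSpace Ω] {μ : Measure Ω}

lemma negMulLog_sum_le {ι : Type*} (s : Finset ι) (p : ι → ℝ)
    (hp : ∀ i ∈ s, 0 ≤ p i) :
    Real.negMulLog (∑ i ∈ s, p i) ≤ ∑ i ∈ s, Real.negMulLog (p i) := by
  have h1 : Real.negMulLog (∑ i ∈ s, p i)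
      = ∑ i ∈ s, -(p i * Real.log (∑ j ∈ s, p j)) := by
    rw [Real.negMulLog, neg_mul, Finset.sum_mul, ← Finset.sum_neg_distrib]
  rw [h1]
  refine Finset.sum_le_sum fun i hi => ?_
  rcases eq_or_lt_of_le (hp i hi) with h0 | h0
  · simp [Real.negMulLog, ← h0]
  · have hle : p i ≤ ∑ j ∈ s, p j := Finset.single_le_sum hp hi
    have hlog : Real.log (p i) ≤ Real.log (∑ j ∈ s, p j) := Real.log_le_log h0 hle
    have h2 := mul_le_mul_of_nonneg_left hlog h0.le
    rw [Real.negMulLog, neg_mul]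
    nlinarith

lemma meas_part [IsFiniteMeasure μ] {T : Type*} [Fintype T] [MeasurableSpace T]
    [MeasurableSingletonClass T]
    (s : Set Ω) (hs : MeasurableSet s) (W : Ω → T) (hW : Measurable W) :
    (μ s).toReal = ∑ t : T, (μ (s ∩ W ⁻¹' {t})).toReal := by
  have hset : s = ⋃ t ∈ (Finset.univ : Finset T), s ∩ W ⁻¹' {t} := by
    ext ω; simp
  have hm : μ s = ∑ t : T, μ (s ∩ W ⁻¹' {t}) := by
    conv_lhs => rw [hset]
    rw [measure_biUnion_finset]
    · intro x _ y _ hxy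
      refine Set.disjoint_left.mpr ?_
      rintro ω ⟨_, h1⟩ ⟨_, h2⟩
      simp only [Set.mem_preimage, Set.mem_singleton_iff] at h1 h2
      exact hxy (h1 ▸ h2 ▸ rfl)
    · exact fun t _ => hs.inter (hW (measurableSet_singleton t))
  rw [hm, ENNReal.toReal_sum fun a _ => measure_ne_top μ _]

/-- probability of a composed random variable as a sum of fiber probabilities -/
lemma comp_toReal [IsFiniteMeasure μ] {S T : Type*} [Fintype S] [MeasurableSpace S]
    [MeasurableSingletonClass S] [DecidableEq T]
    (W : Ω → S) (hW : Measurable W) (g : S → T) (u : T) :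
    (μ ((fun ω => g (W ω)) ⁻¹' {u})).toReal
      = ∑ v ∈ Finset.univ.filter (fun v => g v = u), (μ (W ⁻¹' {v})).toReal := by
  have hpre : (fun ω => g (W ω)) ⁻¹' {u} = W ⁻¹' (g ⁻¹' {u}) := rfl
  have hmeas : MeasurableSet (W ⁻¹' (g ⁻¹' {u})) :=
    hW ((Set.to_countable _).measurableSet)
  rw [hpre, meas_part _ hmeas W hW, Finset.sum_filter]
  refine Finset.sum_congr rfl fun v _ => ?_
  by_cases h : g v = u
  · have hs : W ⁻¹' (g ⁻¹' {u}) ∩ W ⁻¹' {v} = W ⁻¹' {v} := by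
      ext ω
      simp only [Set.mem_inter_iff, Set.mem_preimage, Set.mem_singleton_iff]
      constructor
      · exact fun ⟨_, h2⟩ => h2
      · intro h2; exact ⟨by rw [h2]; exact h, h2⟩
    simp [h, hs]
  · have hs : W ⁻¹' (g ⁻¹' {u}) ∩ W ⁻¹' {v} = ∅ := by
      ext ω
      simp only [Set.mem_inter_iff, Set.mem_preimage, Set.mem_singleton_iff,
        Set.mem_empty_iff_false, iff_false, not_and]
      intro h1 h2
      exact h (h2 ▸ h1)
    simp [h, hs]

lemma sum_p_eq_one [IsProbabilityMeasure μ] {S : Type*} [Fintype S] [MeasurableSpace S]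
    [MeasurableSingletonClass S] (W : Ω → S) (hW : Measurable W) :
    ∑ v : S, (μ (W ⁻¹' {v})).toReal = 1 := by
  have h := meas_part (μ := μ) Set.univ MeasurableSet.univ W hW
  simp only [Set.univ_inter, measure_univ, ENNReal.toReal_one] at h
  exact h.symm

lemma Hent_reindex {S T : Type*} [Fintype S] [Fintype T]
    (X : Ω → S) (Y : Ω → T) (e : S → T) (he : Function.Injective e)
    (hYX : ∀ ω, Y ω = e (X ω)) : Hent μ Y = Hent μ X := by
  classical
  unfold Hent
  have h0 : ∀ t ∈ Finset.univ, t ∉ Finset.univ.image e →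
      Real.negMulLog (μ (Y ⁻¹' {t})).toReal = 0 := by
    intro t _ ht
    have hempty : Y ⁻¹' {t} = ∅ := by
      ext ω
      simp only [Set.mem_preimage, Set.mem_singleton_iff, Set.mem_empty_iff_false, iff_false]
      intro h
      exact ht (Finset.mem_image.mpr ⟨X ω, Finset.mem_univ _, by rw [← hYX ω, h]⟩)
    simp [hempty]
  rw [← Finset.sum_subset (Finset.subset_univ (Finset.univ.image e)) h0,
    Finset.sum_image (fun a _ b _ h => he h)]
  refine Finset.sum_congr rfl fun s _ => ?_
  have hset : Y ⁻¹' {e s} = X ⁻¹' {s} := by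
    ext ω
    simp only [Set.mem_preimage, Set.mem_singleton_iff, hYX ω]
    exact he.eq_iff
  rw [hset]

lemma Hent_comp_le [IsFiniteMeasure μ] {S T : Type*} [Fintype S] [MeasurableSpace S]
    [MeasurableSingletonClass S] [Fintype T]
    (W : Ω → S) (hW : Measurable W) (g : S → T) :
    Hent μ (fun ω => g (W ω)) ≤ Hent μ W := by
  classical
  unfold Hent
  calc ∑ u : T, Real.negMulLog (μ ((fun ω => g (W ω)) ⁻¹' {u})).toReal
      ≤ ∑ u : T, ∑ v ∈ Finset.univ.filter (fun v => g v = u),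
          Real.negMulLog (μ (W ⁻¹' {v})).toReal := by
        refine Finset.sum_le_sum fun u _ => ?_
        rw [comp_toReal W hW g u]
        exact negMulLog_sum_le _ _ (fun v _ => ENNReal.toReal_nonneg)
    _ = ∑ v : S, Real.negMulLog (μ (W ⁻¹' {v})).toReal := Finset.sum_fiberwise _ _ _

end Aux

set_option linter.unusedSectionVars false

noncomputable def q3 {Ω S T U : Type*} [MeasurableSpace Ω] (μ : MeasureTheory.Measure Ω)
    (X : Ω → S) (Y : Ω → T) (Z : Ω → U) (x : S) (y : T) (z : U) : ℝ :=
  (μ (X ⁻¹' {x} ∩ Y ⁻¹' {y} ∩ Z ⁻¹' {z})).toReal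

section Three
variable {Ω : Type*} [MeasurableSpace Ω] {μ : Measure Ω}
    [IsProbabilityMeasure μ] {S T U : Type*}
    [Fintype S] [MeasurableSpace S] [MeasurableSingletonClass S]
    [Fintype T] [MeasurableSpace T] [MeasurableSingletonClass T]
    [Fintype U] [MeasurableSpace U] [MeasurableSingletonClass U]

lemma q3_nonneg (X : Ω → S) (Y : Ω → T) (Z : Ω → U) (x : S) (y : T) (z : U) :
    0 ≤ q3 μ X Y Z x y z :=
  ENNReal.toReal_nonneg

lemma tri_pre (X : Ω → S) (Y : Ω → T) (Z : Ω → U) (x : S) (y : T) (z : U) :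
    (fun ω => (X ω, Y ω, Z ω)) ⁻¹' {(x, y, z)}
      = X ⁻¹' {x} ∩ Y ⁻¹' {y} ∩ Z ⁻¹' {z} := by
  ext ω
  simp only [Set.mem_preimage, Set.mem_singleton_iff, Prod.mk.injEq, Set.mem_inter_iff]
  tauto

lemma margA (X : Ω → S) (Y : Ω → T) (Z : Ω → U)
    (hX : Measurable X) (hY : Measurable Y) (hZ : Measurable Z) (x : S) (z : U) :
    (μ (X ⁻¹' {x} ∩ Z ⁻¹' {z})).toReal = ∑ y : T, q3 μ X Y Z x y z := by
  rw [meas_part (X ⁻¹' {x} ∩ Z ⁻¹' {z})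
    ((hX (measurableSet_singleton x)).inter (hZ (measurableSet_singleton z))) Y hY]
  refine Finset.sum_congr rfl fun y _ => ?_
  unfold q3
  congr 2
  ext ω
  simp only [Set.mem_inter_iff, Set.mem_preimage, Set.mem_singleton_iff]
  tauto

lemma margB (X : Ω → S) (Y : Ω → T) (Z : Ω → U)
    (hX : Measurable X) (hY : Measurable Y) (hZ : Measurable Z) (y : T) (z : U) :
    (μ (Y ⁻¹' {y} ∩ Z ⁻¹' {z})).toReal = ∑ x : S, q3 μ X Y Z x y z := by
  rw [meas_part (Y ⁻¹' {y} ∩ Z ⁻¹' {z})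
    ((hY (measurableSet_singleton y)).inter (hZ (measurableSet_singleton z))) X hX]
  refine Finset.sum_congr rfl fun x _ => ?_
  unfold q3
  congr 2
  ext ω
  simp only [Set.mem_inter_iff, Set.mem_preimage, Set.mem_singleton_iff]
  tauto

lemma margC (X : Ω → S) (Y : Ω → T) (Z : Ω → U)
    (hX : Measurable X) (hY : Measurable Y) (hZ : Measurable Z) (z : U) :
    (μ (Z ⁻¹' {z})).toReal = ∑ x : S, ∑ y : T, q3 μ X Y Z x y z := by
  rw [meas_part (Z ⁻¹' {z}) (hZ (measurableSet_singleton z)) X hX]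
  refine Finset.sum_congr rfl fun x _ => ?_
  rw [Set.inter_comm, margA X Y Z hX hY hZ]

lemma HentXZ_eq (X : Ω → S) (Y : Ω → T) (Z : Ω → U)
    (hX : Measurable X) (hY : Measurable Y) (hZ : Measurable Z) :
    Hent μ (fun ω => (X ω, Z ω))
      = ∑ x : S, ∑ z : U, Real.negMulLog (∑ y : T, q3 μ X Y Z x y z) := by
  unfold Hent
  rw [Fintype.sum_prod_type]
  refine Finset.sum_congr rfl fun x _ => Finset.sum_congr rfl fun z _ => ?_
  rw [← margA X Y Z hX hY hZ]
  congr 3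
  ext ω
  simp only [Set.mem_preimage, Set.mem_singleton_iff, Prod.mk.injEq, Set.mem_inter_iff]

lemma HentYZ_eq (X : Ω → S) (Y : Ω → T) (Z : Ω → U)
    (hX : Measurable X) (hY : Measurable Y) (hZ : Measurable Z) :
    Hent μ (fun ω => (Y ω, Z ω))
      = ∑ y : T, ∑ z : U, Real.negMulLog (∑ x : S, q3 μ X Y Z x y z) := by
  unfold Hent
  rw [Fintype.sum_prod_type]
  refine Finset.sum_congr rfl fun y _ => Finset.sum_congr rfl fun z _ => ?_
  rw [← margB X Y Z hX hY hZ]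
  congr 3
  ext ω
  simp only [Set.mem_preimage, Set.mem_singleton_iff, Prod.mk.injEq, Set.mem_inter_iff]

lemma HentZ_eq (X : Ω → S) (Y : Ω → T) (Z : Ω → U)
    (hX : Measurable X) (hY : Measurable Y) (hZ : Measurable Z) :
    Hent μ Z = ∑ z : U, Real.negMulLog (∑ x : S, ∑ y : T, q3 μ X Y Z x y z) := by
  unfold Hent
  refine Finset.sum_congr rfl fun z _ => ?_
  rw [← margC X Y Z hX hY hZ]

lemma HentXYZ_eq (X : Ω → S) (Y : Ω → T) (Z : Ω → U) :
    Hent μ (fun ω => (X ω, Y ω, Z ω))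
      = ∑ x : S, ∑ y : T, ∑ z : U, Real.negMulLog (q3 μ X Y Z x y z) := by
  unfold Hent
  rw [Fintype.sum_prod_type]
  refine Finset.sum_congr rfl fun x _ => ?_
  rw [Fintype.sum_prod_type]
  refine Finset.sum_congr rfl fun y _ => Finset.sum_congr rfl fun z _ => ?_
  rw [q3, tri_pre X Y Z]

lemma sum_q3_one (X : Ω → S) (Y : Ω → T) (Z : Ω → U)
    (hX : Measurable X) (hY : Measurable Y) (hZ : Measurable Z) :
    ∑ x : S, ∑ y : T, ∑ z : U, q3 μ X Y Z x y z = 1 := by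
  have h := sum_p_eq_one (μ := μ) (fun ω => (X ω, Y ω, Z ω))
    (hX.prodMk (hY.prodMk hZ))
  rw [Fintype.sum_prod_type] at h
  rw [← h]
  refine Finset.sum_congr rfl fun x _ => ?_
  rw [Fintype.sum_prod_type]
  refine Finset.sum_congr rfl fun y _ => Finset.sum_congr rfl fun z _ => ?_
  rw [q3, tri_pre X Y Z]

end Three

section Core
variable {Ω : Type*} [MeasurableSpace Ω] {μ : Measure Ω}
    [IsProbabilityMeasure μ] {S T U : Type*}
    [Fintype S] [MeasurableSpace S] [MeasurableSingletonClass S]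
    [Fintype T] [MeasurableSpace T] [MeasurableSingletonClass T]
    [Fintype U] [MeasurableSpace U] [MeasurableSingletonClass U]

private lemma term_bound {q a b c : ℝ} (hq : 0 ≤ q) (ha : q ≤ a) (hb : q ≤ b)
    (hc : a ≤ c) (hb0 : 0 ≤ b) (hc0 : 0 ≤ c) :
    Real.negMulLog q + (-(q * Real.log c)) - (-(q * Real.log a)) - (-(q * Real.log b))
      ≤ a * b / c - q := by
  rcases hq.eq_or_lt with h0 | h0
  · rw [← h0]
    simp only [Real.negMulLog_zero, zero_mul, neg_zero, sub_zero, add_zero, sub_zero]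
    have h4 : 0 ≤ a := le_trans hq (h0 ▸ ha)
    have : 0 ≤ a * b / c := by positivity
    linarith
  · have ha0 : 0 < a := lt_of_lt_of_le h0 ha
    have hb0' : 0 < b := lt_of_lt_of_le h0 hb
    have hc0' : 0 < c := lt_of_lt_of_le ha0 hc
    have hpos : 0 < a * b / (q * c) := by positivity
    have hlog : Real.log (a * b / (q * c)) ≤ a * b / (q * c) - 1 :=
      Real.log_le_sub_one_of_pos hpos
    have hsplit : Real.log (a * b / (q * c))
        = Real.log a + Real.log b - (Real.log q + Real.log c) := by
      rw [Real.log_div (mul_pos ha0 hb0').ne' (mul_pos h0 hc0').ne',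
        Real.log_mul ha0.ne' hb0'.ne', Real.log_mul h0.ne' hc0'.ne']
    have h1 : Real.negMulLog q + (-(q * Real.log c)) - (-(q * Real.log a))
        - (-(q * Real.log b)) = q * Real.log (a * b / (q * c)) := by
      rw [hsplit, Real.negMulLog, neg_mul]
      ring
    have h2 : q * Real.log (a * b / (q * c)) ≤ q * (a * b / (q * c) - 1) :=
      mul_le_mul_of_nonneg_left hlog hq
    have h3 : q * (a * b / (q * c) - 1) = a * b / c - q := by
      field_simp
    linarith

private lemma term_eq {q a b c : ℝ} (hq : 0 ≤ q) (ha : q ≤ a) (hb : q ≤ b)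
    (hc : a ≤ c) (hmul : q * c = a * b) :
    Real.negMulLog q + (-(q * Real.log c)) - (-(q * Real.log a)) - (-(q * Real.log b))
      = 0 := by
  rcases hq.eq_or_lt with h0 | h0
  · rw [← h0]
    simp [Real.negMulLog_zero]
  · have ha0 : 0 < a := lt_of_lt_of_le h0 ha
    have hb0' : 0 < b := lt_of_lt_of_le h0 hb
    have hc0' : 0 < c := lt_of_lt_of_le ha0 hc
    have hlog : Real.log q + Real.log c = Real.log a + Real.log b := by
      rw [← Real.log_mul h0.ne' hc0'.ne', ← Real.log_mul ha0.ne' hb0'.ne', hmul]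
    rw [Real.negMulLog, neg_mul]
    nlinarith [hlog]

private lemma sum3_reorder (f : S → T → U → ℝ) :
    ∑ x : S, ∑ y : T, ∑ z : U, f x y z = ∑ z : U, ∑ x : S, ∑ y : T, f x y z := by
  calc ∑ x : S, ∑ y : T, ∑ z : U, f x y z
      = ∑ x : S, ∑ z : U, ∑ y : T, f x y z :=
        Finset.sum_congr rfl fun x _ => Finset.sum_comm
    _ = ∑ z : U, ∑ x : S, ∑ y : T, f x y z := Finset.sum_comm

private lemma sum_ratio (X : Ω → S) (Y : Ω → T) (Z : Ω → U)
    (hX : Measurable X) (hY : Measurable Y) (hZ : Measurable Z) :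
    ∑ x : S, ∑ y : T, ∑ z : U,
      ((∑ y' : T, q3 μ X Y Z x y' z) * (∑ x' : S, q3 μ X Y Z x' y z)
        / (∑ x' : S, ∑ y' : T, q3 μ X Y Z x' y' z) - q3 μ X Y Z x y z) = 0 := by
  classical
  simp only [Finset.sum_sub_distrib]
  rw [sum_q3_one X Y Z hX hY hZ]
  rw [sub_eq_zero]
  have hz : ∀ z : U, ∑ x : S, ∑ y : T,
      ((∑ y' : T, q3 μ X Y Z x y' z) * (∑ x' : S, q3 μ X Y Z x' y z)
        / (∑ x' : S, ∑ y' : T, q3 μ X Y Z x' y' z))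
      = ∑ x' : S, ∑ y' : T, q3 μ X Y Z x' y' z := by
    intro z
    have e1 : ∑ x : S, ∑ y : T,
        ((∑ y' : T, q3 μ X Y Z x y' z) * (∑ x' : S, q3 μ X Y Z x' y z)
          / (∑ x' : S, ∑ y' : T, q3 μ X Y Z x' y' z))
        = (∑ x : S, ∑ y' : T, q3 μ X Y Z x y' z)
          * (∑ y : T, ∑ x' : S, q3 μ X Y Z x' y z)
          / (∑ x' : S, ∑ y' : T, q3 μ X Y Z x' y' z) := by
      rw [Finset.sum_mul, Finset.sum_div]
      refine Finset.sum_congr rfl fun x _ => ?_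
      rw [Finset.mul_sum, Finset.sum_div]
    rw [e1, Finset.sum_comm (f := fun y x' => q3 μ X Y Z x' y z)]
    set c := ∑ x' : S, ∑ y' : T, q3 μ X Y Z x' y' z with hc
    by_cases h : c = 0
    · simp [h]
    · rw [mul_div_assoc, div_self h, mul_one]
  rw [sum3_reorder]
  calc (∑ z : U, ∑ x : S, ∑ y : T,
        ((∑ y' : T, q3 μ X Y Z x y' z) * (∑ x' : S, q3 μ X Y Z x' y z)
          / (∑ x' : S, ∑ y' : T, q3 μ X Y Z x' y' z)))
      = ∑ z : U, ∑ x' : S, ∑ y' : T, q3 μ X Y Z x' y' z :=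
        Finset.sum_congr rfl fun z _ => hz z
    _ = ∑ x : S, ∑ y : T, ∑ z : U, q3 μ X Y Z x y z := (sum3_reorder _).symm
    _ = 1 := sum_q3_one X Y Z hX hY hZ

private lemma e2_expand (X : Ω → S) (Y : Ω → T) (Z : Ω → U) :
    ∑ z : U, Real.negMulLog (∑ x : S, ∑ y : T, q3 μ X Y Z x y z)
      = ∑ x : S, ∑ y : T, ∑ z : U,
          (-(q3 μ X Y Z x y z * Real.log (∑ x' : S, ∑ y' : T, q3 μ X Y Z x' y' z))) := by
  rw [sum3_reorder (fun x y z =>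
    -(q3 μ X Y Z x y z * Real.log (∑ x' : S, ∑ y' : T, q3 μ X Y Z x' y' z)))]
  refine Finset.sum_congr rfl fun z _ => ?_
  rw [Real.negMulLog, neg_mul, Finset.sum_mul, ← Finset.sum_neg_distrib]
  refine Finset.sum_congr rfl fun x _ => ?_
  rw [Finset.sum_mul, ← Finset.sum_neg_distrib]

private lemma e3_expand (X : Ω → S) (Y : Ω → T) (Z : Ω → U) :
    ∑ x : S, ∑ z : U, Real.negMulLog (∑ y : T, q3 μ X Y Z x y z)
      = ∑ x : S, ∑ y : T, ∑ z : U,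
          (-(q3 μ X Y Z x y z * Real.log (∑ y' : T, q3 μ X Y Z x y' z))) := by
  refine Finset.sum_congr rfl fun x _ => ?_
  rw [← Finset.sum_comm (f := fun z y => -(q3 μ X Y Z x y z
      * Real.log (∑ y' : T, q3 μ X Y Z x y' z)))]
  refine Finset.sum_congr rfl fun z _ => ?_
  rw [Real.negMulLog, neg_mul, Finset.sum_mul, ← Finset.sum_neg_distrib]

private lemma e4_expand (X : Ω → S) (Y : Ω → T) (Z : Ω → U) :
    ∑ y : T, ∑ z : U, Real.negMulLog (∑ x : S, q3 μ X Y Z x y z)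
      = ∑ x : S, ∑ y : T, ∑ z : U,
          (-(q3 μ X Y Z x y z * Real.log (∑ x' : S, q3 μ X Y Z x' y z))) := by
  have step : ∀ y : T, ∑ z : U, Real.negMulLog (∑ x : S, q3 μ X Y Z x y z)
      = ∑ x : S, ∑ z : U,
          (-(q3 μ X Y Z x y z * Real.log (∑ x' : S, q3 μ X Y Z x' y z))) := by
    intro y
    rw [← Finset.sum_comm (f := fun z x => -(q3 μ X Y Z x y z
        * Real.log (∑ x' : S, q3 μ X Y Z x' y z)))]
    refine Finset.sum_congr rfl fun z _ => ?_
    rw [Real.negMulLog, neg_mul, Finset.sum_mul, ← Finset.sum_neg_distrib]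
  calc ∑ y : T, ∑ z : U, Real.negMulLog (∑ x : S, q3 μ X Y Z x y z)
      = ∑ y : T, ∑ x : S, ∑ z : U,
          (-(q3 μ X Y Z x y z * Real.log (∑ x' : S, q3 μ X Y Z x' y z))) :=
        Finset.sum_congr rfl fun y _ => step y
    _ = ∑ x : S, ∑ y : T, ∑ z : U,
          (-(q3 μ X Y Z x y z * Real.log (∑ x' : S, q3 μ X Y Z x' y z))) :=
        Finset.sum_comm

lemma Hent_submod (X : Ω → S) (Y : Ω → T) (Z : Ω → U)
    (hX : Measurable X) (hY : Measurable Y) (hZ : Measurable Z) :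
    Hent μ (fun ω => (X ω, Y ω, Z ω)) + Hent μ Z
      ≤ Hent μ (fun ω => (X ω, Z ω)) + Hent μ (fun ω => (Y ω, Z ω)) := by
  classical
  rw [HentXYZ_eq X Y Z, HentZ_eq X Y Z hX hY hZ, HentXZ_eq X Y Z hX hY hZ,
    HentYZ_eq X Y Z hX hY hZ, e2_expand (μ := μ) X Y Z, e3_expand (μ := μ) X Y Z, e4_expand (μ := μ) X Y Z]
  have key : ∑ x : S, ∑ y : T, ∑ z : U,
      (Real.negMulLog (q3 μ X Y Z x y z)
        + (-(q3 μ X Y Z x y z * Real.log (∑ x' : S, ∑ y' : T, q3 μ X Y Z x' y' z)))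
        - (-(q3 μ X Y Z x y z * Real.log (∑ y' : T, q3 μ X Y Z x y' z)))
        - (-(q3 μ X Y Z x y z * Real.log (∑ x' : S, q3 μ X Y Z x' y z)))) ≤ 0 := by
    have hb := sum_ratio (μ := μ) X Y Z hX hY hZ
    rw [← hb]
    refine Finset.sum_le_sum fun x _ => Finset.sum_le_sum fun y _ =>
      Finset.sum_le_sum fun z _ => ?_
    exact term_bound (q3_nonneg X Y Z x y z)
      (Finset.single_le_sum (fun y' _ => q3_nonneg X Y Z x y' z) (Finset.mem_univ y))
      (Finset.single_le_sum (fun x' _ => q3_nonneg X Y Z x' y z) (Finset.mem_univ x))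
      (Finset.single_le_sum (fun x' _ => Finset.sum_nonneg fun y' _ =>
        q3_nonneg X Y Z x' y' z) (Finset.mem_univ x))
      (Finset.sum_nonneg fun x' _ => q3_nonneg X Y Z x' y z)
      (Finset.sum_nonneg fun x' _ => Finset.sum_nonneg fun y' _ => q3_nonneg X Y Z x' y' z)
  simp only [Finset.sum_sub_distrib, Finset.sum_add_distrib] at key
  linarith

lemma Hent_condIndep (X : Ω → S) (Y : Ω → T) (Z : Ω → U)
    (hX : Measurable X) (hY : Measurable Y) (hZ : Measurable Z)
    (hCI : CondIndepFunOf μ X Y Z) :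
    Hent μ (fun ω => (X ω, Y ω, Z ω)) + Hent μ Z
      = Hent μ (fun ω => (X ω, Z ω)) + Hent μ (fun ω => (Y ω, Z ω)) := by
  classical
  rw [HentXYZ_eq X Y Z, HentZ_eq X Y Z hX hY hZ, HentXZ_eq X Y Z hX hY hZ,
    HentYZ_eq X Y Z hX hY hZ, e2_expand (μ := μ) X Y Z, e3_expand (μ := μ) X Y Z, e4_expand (μ := μ) X Y Z]
  have key : ∑ x : S, ∑ y : T, ∑ z : U,
      (Real.negMulLog (q3 μ X Y Z x y z)
        + (-(q3 μ X Y Z x y z * Real.log (∑ x' : S, ∑ y' : T, q3 μ X Y Z x' y' z)))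
        - (-(q3 μ X Y Z x y z * Real.log (∑ y' : T, q3 μ X Y Z x y' z)))
        - (-(q3 μ X Y Z x y z * Real.log (∑ x' : S, q3 μ X Y Z x' y z)))) = 0 := by
    refine Finset.sum_eq_zero fun x _ => Finset.sum_eq_zero fun y _ =>
      Finset.sum_eq_zero fun z _ => ?_
    have hmul : q3 μ X Y Z x y z * (∑ x' : S, ∑ y' : T, q3 μ X Y Z x' y' z)
        = (∑ y' : T, q3 μ X Y Z x y' z) * (∑ x' : S, q3 μ X Y Z x' y z) := by
      have h := congrArg ENNReal.toReal (hCI x y z)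
      rw [ENNReal.toReal_mul, ENNReal.toReal_mul] at h
      rw [← margC X Y Z hX hY hZ, ← margA X Y Z hX hY hZ, ← margB X Y Z hX hY hZ]
      exact h
    exact term_eq (q3_nonneg X Y Z x y z)
      (Finset.single_le_sum (fun y' _ => q3_nonneg X Y Z x y' z) (Finset.mem_univ y))
      (Finset.single_le_sum (fun x' _ => q3_nonneg X Y Z x' y z) (Finset.mem_univ x))
      (Finset.single_le_sum (fun x' _ => Finset.sum_nonneg fun y' _ =>
        q3_nonneg X Y Z x' y' z) (Finset.mem_univ x))
      hmul
  simp only [Finset.sum_sub_distrib, Finset.sum_add_distrib] at key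
  linarith

end Core

section More
variable {Ω : Type*} [MeasurableSpace Ω] {μ : Measure Ω}
    [IsProbabilityMeasure μ] {S T U : Type*}
    [Fintype S] [MeasurableSpace S] [MeasurableSingletonClass S]
    [Fintype T] [MeasurableSpace T] [MeasurableSingletonClass T]
    [Fintype U] [MeasurableSpace U] [MeasurableSingletonClass U]

lemma Hent_indep_add (X : Ω → S) (Y : Ω → T) (hX : Measurable X) (hY : Measurable Y)
    (h : IndepFun X Y μ) :
    Hent μ (fun ω => (X ω, Y ω)) = Hent μ X + Hent μ Y := by
  classical
  unfold Hent
  rw [Fintype.sum_prod_type]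
  have hp : ∀ (x : S) (y : T), (μ ((fun ω => (X ω, Y ω)) ⁻¹' {(x, y)})).toReal
      = (μ (X ⁻¹' {x})).toReal * (μ (Y ⁻¹' {y})).toReal := by
    intro x y
    have hpre : (fun ω => (X ω, Y ω)) ⁻¹' {(x, y)} = X ⁻¹' {x} ∩ Y ⁻¹' {y} := by
      ext ω
      simp only [Set.mem_preimage, Set.mem_singleton_iff, Prod.mk.injEq, Set.mem_inter_iff]
    rw [hpre, h.measure_inter_preimage_eq_mul {x} {y} (measurableSet_singleton x)
      (measurableSet_singleton y), ENNReal.toReal_mul]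
  calc ∑ x : S, ∑ y : T, Real.negMulLog ((μ ((fun ω => (X ω, Y ω)) ⁻¹' {(x, y)})).toReal)
      = ∑ x : S, ∑ y : T, ((μ (Y ⁻¹' {y})).toReal
            * Real.negMulLog ((μ (X ⁻¹' {x})).toReal)
          + (μ (X ⁻¹' {x})).toReal * Real.negMulLog ((μ (Y ⁻¹' {y})).toReal)) := by
        refine Finset.sum_congr rfl fun x _ => Finset.sum_congr rfl fun y _ => ?_
        rw [hp x y, Real.negMulLog_mul]
    _ = ∑ x : S, (Real.negMulLog ((μ (X ⁻¹' {x})).toReal)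
          + (μ (X ⁻¹' {x})).toReal
            * ∑ y : T, Real.negMulLog ((μ (Y ⁻¹' {y})).toReal)) := by
        refine Finset.sum_congr rfl fun x _ => ?_
        rw [Finset.sum_add_distrib, ← Finset.sum_mul, sum_p_eq_one Y hY, one_mul,
          ← Finset.mul_sum]
    _ = ∑ x : S, Real.negMulLog ((μ (X ⁻¹' {x})).toReal)
          + ∑ y : T, Real.negMulLog ((μ (Y ⁻¹' {y})).toReal) := by
        rw [Finset.sum_add_distrib, ← Finset.sum_mul, sum_p_eq_one X hX, one_mul]

lemma Hent_unit : Hent μ (fun _ω : Ω => (() : Unit)) = 0 := by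
  unfold Hent
  have : ((fun _ω : Ω => (() : Unit)) ⁻¹' {()}) = Set.univ := by
    ext ω; simp
  simp [this]

lemma Hent_subadd (X : Ω → S) (Y : Ω → T) (hX : Measurable X) (hY : Measurable Y) :
    Hent μ (fun ω => (X ω, Y ω)) ≤ Hent μ X + Hent μ Y := by
  have h := Hent_submod (μ := μ) X Y (fun _ω => (() : Unit)) hX hY measurable_const
  have h1 : Hent μ (fun ω => (X ω, Y ω, ())) = Hent μ (fun ω => (X ω, Y ω)) :=
    Hent_reindex _ _ (fun p => (p.1, p.2, ()))
      (by intro p q hpq; simp only [Prod.ext_iff] at hpq ⊢; tauto) (fun ω => rfl)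
  have h3 : Hent μ (fun ω => (X ω, ())) = Hent μ X :=
    Hent_reindex _ _ (fun x => (x, ()))
      (by intro p q hpq; simp only [Prod.ext_iff] at hpq; tauto) (fun ω => rfl)
  have h4 : Hent μ (fun ω => (Y ω, ())) = Hent μ Y :=
    Hent_reindex _ _ (fun y => (y, ()))
      (by intro p q hpq; simp only [Prod.ext_iff] at hpq; tauto) (fun ω => rfl)
  have h2 : Hent μ (fun _ω : Ω => (() : Unit)) = 0 := Hent_unit
  linarith

end More

theorem secrecy_converse_core
    {Ω SM SB SC SD SE SF : Type*} [MeasurableSpace Ω]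
    [Fintype SM] [Nonempty SM] [MeasurableSpace SM] [MeasurableSingletonClass SM]
    [Fintype SB] [Nonempty SB] [MeasurableSpace SB] [MeasurableSingletonClass SB]
    [Fintype SC] [Nonempty SC] [MeasurableSpace SC] [MeasurableSingletonClass SC]
    [Fintype SD] [Nonempty SD] [MeasurableSpace SD] [MeasurableSingletonClass SD]
    [Fintype SE] [Nonempty SE] [MeasurableSpace SE] [MeasurableSingletonClass SE]
    [Fintype SF] [Nonempty SF] [MeasurableSpace SF] [MeasurableSingletonClass SF]
    (μ : Measure Ω) [IsProbabilityMeasure μ]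
    (M : Ω → SM) (B : Ω → SB) (C : Ω → SC) (D : Ω → SD) (E : Ω → SE) (F : Ω → SF)
    (hMm : Measurable M) (hBm : Measurable B) (hCm : Measurable C)
    (hDm : Measurable D) (hEm : Measurable E) (hFm : Measurable F)
    (n ε δ K : ℝ) (hn : 0 ≤ n) (hε : 0 ≤ ε) (hδ : 0 ≤ δ)
    (hHM : Hent μ M = K * n)
    (hIndBDF : IndepFun M (fun ω => (B ω, D ω, F ω)) μ)
    (hIndF : IndepFun (fun ω => (M ω, B ω, C ω, D ω)) F μ)
    (hCI : CondIndepFunOf μ C D (fun ω => (M ω, B ω)))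
    (hHB : Hent μ B ≤ n) (hHC : Hent μ C ≤ n) (hHD : Hent μ D ≤ n)
    (hHE : Hent μ E ≤ (K - 1) * n)
    (hFano : condHent μ M (fun ω => (C ω, D ω, E ω, F ω)) ≤ n * ε)
    (hSecrecy : condHent μ M C ≥ K * n - n * δ) :
    mutInfo μ B D ≥ n - 8 * n * ε - 5 * n * δ := by
  classical
  have hCDm : Measurable (fun ω => (C ω, D ω)) := hCm.prodMk hDm
  have hMCm : Measurable (fun ω => (M ω, C ω)) := hMm.prodMk hCm
  have hMBm : Measurable (fun ω => (M ω, B ω)) := hMm.prodMk hBm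
  have hCDFm : Measurable (fun ω => (C ω, D ω, F ω)) := hCm.prodMk (hDm.prodMk hFm)
  have hMCDm : Measurable (fun ω => (M ω, C ω, D ω)) := hMm.prodMk hCDm
  have i1 : IndepFun (fun ω => (M ω, C ω, D ω)) F μ :=
    hIndF.comp (measurable_fst.prodMk (measurable_snd.comp measurable_snd)) measurable_id
  have i2 : IndepFun (fun ω => (C ω, D ω)) F μ :=
    hIndF.comp (measurable_snd.comp measurable_snd) measurable_id
  have i3 : IndepFun M (fun ω => (B ω, D ω)) μ :=
    hIndBDF.comp measurable_id
      (measurable_fst.prodMk (measurable_fst.comp measurable_snd))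
  have i4 : IndepFun M B μ := hIndBDF.comp measurable_id measurable_fst
  have a1 : Hent μ (fun ω => ((M ω, C ω, D ω), F ω))
      = Hent μ (fun ω => (M ω, C ω, D ω)) + Hent μ F :=
    Hent_indep_add _ F hMCDm hFm i1
  have a1' : Hent μ (fun ω => (M ω, C ω, D ω, F ω))
      = Hent μ (fun ω => ((M ω, C ω, D ω), F ω)) :=
    Hent_reindex _ _ (fun p => (p.1.1, p.1.2.1, p.1.2.2, p.2))
      (by intro p q hpq; simp only [Prod.ext_iff] at hpq ⊢; tauto) (fun ω => rfl)
  have a2 : Hent μ (fun ω => ((C ω, D ω), F ω))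
      = Hent μ (fun ω => (C ω, D ω)) + Hent μ F :=
    Hent_indep_add _ F hCDm hFm i2
  have a2' : Hent μ (fun ω => (C ω, D ω, F ω))
      = Hent μ (fun ω => ((C ω, D ω), F ω)) :=
    Hent_reindex _ _ (fun p => (p.1.1, p.1.2, p.2))
      (by intro p q hpq; simp only [Prod.ext_iff] at hpq ⊢; tauto) (fun ω => rfl)
  have a3 : Hent μ (fun ω => (M ω, C ω, D ω, F ω))
      ≤ Hent μ (fun ω => (M ω, C ω, D ω, E ω, F ω)) :=
    Hent_comp_le (fun ω => (M ω, C ω, D ω, E ω, F ω))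
      (hMm.prodMk (hCm.prodMk (hDm.prodMk (hEm.prodMk hFm))))
      (fun p => (p.1, p.2.1, p.2.2.1, p.2.2.2.2))
  have a4 : Hent μ (fun ω => (E ω, (C ω, D ω, F ω)))
      ≤ Hent μ E + Hent μ (fun ω => (C ω, D ω, F ω)) :=
    Hent_subadd E _ hEm hCDFm
  have a4' : Hent μ (fun ω => (C ω, D ω, E ω, F ω))
      = Hent μ (fun ω => (E ω, (C ω, D ω, F ω))) :=
    Hent_reindex _ _ (fun p => (p.2.1, p.2.2.1, p.1, p.2.2.2))
      (by intro p q hpq; simp only [Prod.ext_iff] at hpq ⊢; tauto) (fun ω => rfl)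
  have f1 : condHent μ M (fun ω => (C ω, D ω, E ω, F ω))
      = Hent μ (fun ω => (M ω, C ω, D ω, E ω, F ω))
        - Hent μ (fun ω => (C ω, D ω, E ω, F ω)) := rfl
  have s1 : condHent μ M C = Hent μ (fun ω => (M ω, C ω)) - Hent μ C := rfl
  have u1 : Hent μ (fun ω => (D ω, B ω, M ω, C ω)) + Hent μ (fun ω => (M ω, C ω))
      ≤ Hent μ (fun ω => (D ω, M ω, C ω)) + Hent μ (fun ω => (B ω, M ω, C ω)) :=
    Hent_submod D B (fun ω => (M ω, C ω)) hDm hBm hMCm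
  have u2 : Hent μ (fun ω => (C ω, D ω, M ω, B ω)) + Hent μ (fun ω => (M ω, B ω))
      = Hent μ (fun ω => (C ω, M ω, B ω)) + Hent μ (fun ω => (D ω, M ω, B ω)) :=
    Hent_condIndep C D (fun ω => (M ω, B ω)) hCm hDm hMBm hCI
  have u3 : Hent μ (fun ω => (D ω, B ω, M ω, C ω))
      = Hent μ (fun ω => (C ω, D ω, M ω, B ω)) :=
    Hent_reindex _ _ (fun p => (p.2.1, p.2.2.2, p.2.2.1, p.1))
      (by intro p q hpq; simp only [Prod.ext_iff] at hpq ⊢; tauto) (fun ω => rfl)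
  have u4 : Hent μ (fun ω => (B ω, M ω, C ω))
      = Hent μ (fun ω => (C ω, M ω, B ω)) :=
    Hent_reindex _ _ (fun p => (p.2.2, p.2.1, p.1))
      (by intro p q hpq; simp only [Prod.ext_iff] at hpq ⊢; tauto) (fun ω => rfl)
  have u5 : Hent μ (fun ω => (D ω, M ω, C ω))
      = Hent μ (fun ω => (M ω, C ω, D ω)) :=
    Hent_reindex _ _ (fun p => (p.2.2, p.1, p.2.1))
      (by intro p q hpq; simp only [Prod.ext_iff] at hpq ⊢; tauto) (fun ω => rfl)
  have u6 : Hent μ (fun ω => (D ω, M ω, B ω))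
      = Hent μ (fun ω => (M ω, B ω, D ω)) :=
    Hent_reindex _ _ (fun p => (p.2.2, p.1, p.2.1))
      (by intro p q hpq; simp only [Prod.ext_iff] at hpq ⊢; tauto) (fun ω => rfl)
  have u7 : Hent μ (fun ω => (M ω, B ω, D ω))
      = Hent μ M + Hent μ (fun ω => (B ω, D ω)) :=
    Hent_indep_add M _ hMm (hBm.prodMk hDm) i3
  have u8 : Hent μ (fun ω => (M ω, B ω)) = Hent μ M + Hent μ B :=
    Hent_indep_add M B hMm hBm i4
  have u9 : Hent μ (fun ω => (C ω, D ω)) ≤ Hent μ C + Hent μ D :=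
    Hent_subadd C D hCm hDm
  have hnε : 0 ≤ n * ε := mul_nonneg hn hε
  have hnδ : 0 ≤ n * δ := mul_nonneg hn hδ
  rw [f1] at hFano
  rw [s1] at hSecrecy
  rw [mutInfo, condHent]
  linarith
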